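/- Let L be a Lie algebra of a set-arrangement 𝒜 on X and suppose [x, im(s_A')] = 0 for all A ∈ 𝒜 and all x ∈ X \ A. Then L' = ⊕_{A∈𝒜} im(s_A') (internal direct sum), [im(s_A'), im(s_B')] = 0 for A ≠ B, and L' is isomorphic as a Lie algebra to the direct product ⊕_{A∈𝒜} L_A'. -/

import Mathlib

open FreeLieAlgebra

/-- A set-arrangement on `X`: every member has at least two elements, two distinct members
meet in at most one element, and the union of all members is `X`. -/
def IsSetArrangement {X : Type*} (𝒜 : Set (Set X)) : Prop :=
  (∀ A ∈ 𝒜, 2 ≤ A.ncard) ∧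
    (∀ A ∈ 𝒜, ∀ B ∈ 𝒜, A ≠ B → (A ∩ B).Subsingleton) ∧
    ⋃₀ 𝒜 = Set.univ

variable (C : Type*) [CommRing C] {X : Type*}

/-- The inclusion `F(A) → F(X)` of free Lie algebras. -/
noncomputable def inclX (A : Set X) : FreeLieAlgebra C A →ₗ⁅C⁆ FreeLieAlgebra C X :=
  FreeLieAlgebra.lift C fun a => FreeLieAlgebra.of C (a : X)

/-- The inclusion `F(A) → F(S)` of free Lie algebras along `A ⊆ S`. -/
noncomputable def inclSub {A S : Set X} (h : A ⊆ S) :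
    FreeLieAlgebra C A →ₗ⁅C⁆ FreeLieAlgebra C S :=
  FreeLieAlgebra.lift C fun a => FreeLieAlgebra.of C (⟨a.1, h a.2⟩ : S)

/-- Admissibility of the relations: `R_A ⊆ [F(A), F(A)]`. -/
def AdmissibleRel (𝒜 : Set (Set X)) (Rel : ∀ A : Set X, Set (FreeLieAlgebra C A)) : Prop :=
  ∀ A ∈ 𝒜, Rel A ⊆ (LieAlgebra.derivedSeries C (FreeLieAlgebra C A) 1 : Set (FreeLieAlgebra C A))

/-- The defining ideal of a Lie algebra of a set-arrangement: generated by all `⁅x,y⁆` for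
pairs not contained in any member of `𝒜`, together with the relations `R_A`, `A ∈ 𝒜`. -/
noncomputable def definingIdeal (𝒜 : Set (Set X)) (Rel : ∀ A : Set X, Set (FreeLieAlgebra C A)) :
    LieIdeal C (FreeLieAlgebra C X) :=
  LieSubmodule.lieSpan C (FreeLieAlgebra C X)
    ({z | ∃ x y : X, (∀ A ∈ 𝒜, ¬({x, y} : Set X) ⊆ A) ∧ z = ⁅of C x, of C y⁆} ∪
      ⋃ A, ⋃ (_ : A ∈ 𝒜), inclX C A '' Rel A)

/-- The Lie algebra `L` of the set-arrangement `𝒜` with relations `Rel`. -/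
noncomputable abbrev ArrLie (𝒜 : Set (Set X)) (Rel : ∀ A : Set X, Set (FreeLieAlgebra C A)) :=
  FreeLieAlgebra C X ⧸ definingIdeal C 𝒜 Rel

/-- The quotient map `F(X) → L`. -/
noncomputable def arrMk (𝒜 : Set (Set X)) (Rel : ∀ A : Set X, Set (FreeLieAlgebra C A)) :
    FreeLieAlgebra C X → ArrLie C 𝒜 Rel :=
  LieSubmodule.Quotient.mk (N := definingIdeal C 𝒜 Rel)

/-- The ideal `⟨R_A⟩` of `F(A)`. -/
noncomputable def locIdeal (A : Set X) (Rel : ∀ A : Set X, Set (FreeLieAlgebra C A)) :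
    LieIdeal C (FreeLieAlgebra C A) :=
  LieSubmodule.lieSpan C (FreeLieAlgebra C A) (Rel A)

/-- The localized Lie algebra `L_A = F(A)/⟨R_A⟩`. -/
noncomputable abbrev LocLie (A : Set X) (Rel : ∀ A : Set X, Set (FreeLieAlgebra C A)) :=
  FreeLieAlgebra C A ⧸ locIdeal C A Rel

/-- The quotient map `F(A) → L_A`. -/
noncomputable def locMk (A : Set X) (Rel : ∀ A : Set X, Set (FreeLieAlgebra C A)) :
    FreeLieAlgebra C A → LocLie C A Rel :=
  LieSubmodule.Quotient.mk (N := locIdeal C A Rel)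

open Classical in
/-- The canonical Lie algebra map `F(X) → L_A` killing the generators outside `A`. -/
noncomputable def locProj (A : Set X) (Rel : ∀ A : Set X, Set (FreeLieAlgebra C A)) :
    FreeLieAlgebra C X →ₗ⁅C⁆ LocLie C A Rel :=
  FreeLieAlgebra.lift C fun x : X =>
    if h : x ∈ A then locMk C A Rel (of C (⟨x, h⟩ : A)) else 0

/-- The replacement condition. -/
def ReplacementCond (𝒜 : Set (Set X)) (Rel : ∀ A : Set X, Set (FreeLieAlgebra C A)) : Prop :=
  ∀ A ∈ 𝒜, 3 ≤ A.ncard → ∀ x ∈ A, (∃ B ∈ 𝒜, B ≠ A ∧ x ∈ B) →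
    (LieAlgebra.derivedSeries C (LocLie C A Rel) 1 : Set (LocLie C A Rel)) ⊆
      (LieSubalgebra.lieSpan C (LocLie C A Rel)
        {z | ∃ a : A, (a : X) ≠ x ∧ z = locMk C A Rel (of C a)} : Set (LocLie C A Rel))

/-- Lie monomials of weight `n` with respect to a weighting `d` of the generators. -/
inductive IsLieMonomial (d : X → ℕ) : FreeLieAlgebra C X → ℕ → Prop
  | of (x : X) : IsLieMonomial d (of C x) (d x)
  | lie {u v : FreeLieAlgebra C X} {m n : ℕ} :
      IsLieMonomial d u m → IsLieMonomial d v n → IsLieMonomial d ⁅u, v⁆ (m + n)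

/-- Homogeneity of an element of the free Lie algebra with respect to a weighting. -/
def IsHomogeneous (d : X → ℕ) (r : FreeLieAlgebra C X) : Prop :=
  ∃ n : ℕ, r ∈ Submodule.span C {u | IsLieMonomial C d u n}

/-- The support of a sub-arrangement. -/
def arrSupp {X : Type*} (ℬ : Set (Set X)) : Set X := ⋃₀ ℬ

/-- `ℬ` is a closed sub-arrangement of `𝒜`. -/
def IsClosedSub {X : Type*} (𝒜 ℬ : Set (Set X)) : Prop :=
  ℬ ⊆ 𝒜 ∧ ∀ A ∈ 𝒜, A ∉ ℬ → (A ∩ arrSupp ℬ).Subsingleton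

/-- The relations `R_ℬ` of a sub-arrangement. -/
noncomputable def subRel (ℬ : Set (Set X)) (Rel : ∀ A : Set X, Set (FreeLieAlgebra C A)) :
    Set (FreeLieAlgebra C (arrSupp ℬ)) :=
  (⋃ B, ⋃ h : B ∈ ℬ, inclSub C (Set.subset_sUnion_of_mem h) '' Rel B) ∪
    {z | ∃ x y : arrSupp ℬ, (∀ B ∈ ℬ, ¬({(x : X), (y : X)} : Set X) ⊆ B) ∧
      z = ⁅of C x, of C y⁆}

/-- The ideal `⟨R_ℬ⟩` of `F(supp ℬ)`. -/
noncomputable def subIdeal (ℬ : Set (Set X)) (Rel : ∀ A : Set X, Set (FreeLieAlgebra C A)) :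
    LieIdeal C (FreeLieAlgebra C (arrSupp ℬ)) :=
  LieSubmodule.lieSpan C (FreeLieAlgebra C (arrSupp ℬ)) (subRel C ℬ Rel)

/-- The localized Lie algebra `L_ℬ` at a sub-arrangement. -/
noncomputable abbrev SubLie (ℬ : Set (Set X)) (Rel : ∀ A : Set X, Set (FreeLieAlgebra C A)) :=
  FreeLieAlgebra C (arrSupp ℬ) ⧸ subIdeal C ℬ Rel

/-- The quotient map `F(supp ℬ) → L_ℬ`. -/
noncomputable def subMk (ℬ : Set (Set X)) (Rel : ∀ A : Set X, Set (FreeLieAlgebra C A)) :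
    FreeLieAlgebra C (arrSupp ℬ) → SubLie C ℬ Rel :=
  LieSubmodule.Quotient.mk (N := subIdeal C ℬ Rel)

open Classical in
/-- The canonical Lie algebra map `F(X) → L_ℬ` killing the generators outside `supp ℬ`. -/
noncomputable def subProj (ℬ : Set (Set X)) (Rel : ∀ A : Set X, Set (FreeLieAlgebra C A)) :
    FreeLieAlgebra C X →ₗ⁅C⁆ SubLie C ℬ Rel :=
  FreeLieAlgebra.lift C fun x : X =>
    if h : x ∈ arrSupp ℬ then subMk C ℬ Rel (of C (⟨x, h⟩ : arrSupp ℬ)) else 0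

open scoped DirectSum

-- ===== auxiliary development =====

section Aux0
variable {C : Type*} [CommRing C]

/-- The quotient map by a Lie ideal, as a morphism of Lie algebras. -/
noncomputable def lieMkHom {L : Type*} [LieRing L] [LieAlgebra C L] (I : LieIdeal C L) :
    L →ₗ⁅C⁆ L ⧸ I :=
  { I.toSubmodule.mkQ with map_lie' := fun {_ _} => rfl }

@[simp] theorem lieMkHom_apply {L : Type*} [LieRing L] [LieAlgebra C L] (I : LieIdeal C L)
    (x : L) : lieMkHom I x = LieSubmodule.Quotient.mk (N := I) x := rfl

/-- Lifting a Lie algebra morphism through a quotient. -/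
noncomputable def lieQuotLift {L M : Type*} [LieRing L] [LieAlgebra C L] [LieRing M]
    [LieAlgebra C M] (I : LieIdeal C L) (f : L →ₗ⁅C⁆ M) (h : ∀ x ∈ I, f x = 0) :
    (L ⧸ I) →ₗ⁅C⁆ M :=
  { I.toSubmodule.liftQ f.toLinearMap (fun x hx => h x hx) with
    map_lie' := fun {x y} => by
      obtain ⟨a, rfl⟩ := LieSubmodule.Quotient.surjective_mk' I x
      obtain ⟨b, rfl⟩ := LieSubmodule.Quotient.surjective_mk' I y
      have : (⁅LieSubmodule.Quotient.mk' I a, LieSubmodule.Quotient.mk' I b⁆ :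
          L ⧸ I) = LieSubmodule.Quotient.mk' I ⁅a, b⁆ := rfl
      simp only [this]
      exact f.map_lie a b }

@[simp] theorem lieQuotLift_mk {L M : Type*} [LieRing L] [LieAlgebra C L] [LieRing M]
    [LieAlgebra C M] (I : LieIdeal C L) (f : L →ₗ⁅C⁆ M) (h : ∀ x ∈ I, f x = 0) (a : L) :
    lieQuotLift I f h (LieSubmodule.Quotient.mk (N := I) a) = f a := rfl

/-- Every element of the free Lie algebra lies in any Lie subalgebra containing the
generators. -/
theorem freeLie_mem_subalgebra {X : Type*} {K : LieSubalgebra C (FreeLieAlgebra C X)}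
    (h : ∀ x : X, of C x ∈ K) (w : FreeLieAlgebra C X) : w ∈ K := by
  have hid : K.incl.comp (FreeLieAlgebra.lift C fun x => (⟨of C x, h x⟩ : K)) =
      LieHom.id := by
    apply FreeLieAlgebra.hom_ext
    intro x
    simp [FreeLieAlgebra.lift_of_apply]
  have h2 := LieHom.congr_fun hid w
  rw [show w = K.incl.comp (FreeLieAlgebra.lift C fun x => (⟨of C x, h x⟩ : K)) w from h2.symm]
  exact ((FreeLieAlgebra.lift C fun x => (⟨of C x, h x⟩ : K)) w).2

/-- The derived subalgebra as a linear span of brackets. -/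
theorem derived_coe_span (L : Type*) [LieRing L] [LieAlgebra C L] :
    LieSubmodule.toSubmodule (LieAlgebra.derivedSeries C L 1) =
      Submodule.span C {m : L | ∃ u v : L, ⁅u, v⁆ = m} := by
  have : LieAlgebra.derivedSeries C L 1 = ⁅(⊤ : LieIdeal C L), (⊤ : LieIdeal C L)⁆ := by
    rw [LieAlgebra.derivedSeries_def, LieAlgebra.derivedSeriesOfIdeal_succ,
      LieAlgebra.derivedSeriesOfIdeal_zero]
  rw [this, LieSubmodule.lieIdeal_oper_eq_linear_span']
  congr 1
  ext m
  constructor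
  · rintro ⟨x, -, n, -, rfl⟩; exact ⟨x, n, rfl⟩
  · rintro ⟨u, v, rfl⟩; exact ⟨u, trivial, v, trivial, rfl⟩

theorem mem_derived_iff {L : Type*} [LieRing L] [LieAlgebra C L] (m : L) :
    m ∈ LieAlgebra.derivedSeries C L 1 ↔
      m ∈ Submodule.span C {m : L | ∃ u v : L, ⁅u, v⁆ = m} := by
  rw [← derived_coe_span]; rfl

end Aux0

section Aux1
variable {C : Type*} [CommRing C]

theorem pairwise_bracket_zero {Y M : Type*} [LieRing M] [LieAlgebra C M]
    (g : FreeLieAlgebra C Y →ₗ⁅C⁆ M)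
    (h : ∀ y y' : Y, ⁅g (of C y), g (of C y')⁆ = 0) (w w' : FreeLieAlgebra C Y) :
    ⁅g w, g w'⁆ = 0 := by
  set V : Submodule C M := Submodule.span C (Set.range fun y => g (of C y)) with hV
  have hbr : ∀ v ∈ V, ∀ u ∈ V, ⁅v, u⁆ = 0 := by
    intro v hv
    induction hv using Submodule.span_induction with
    | mem v hv =>
      obtain ⟨y, rfl⟩ := hv
      intro u hu
      induction hu using Submodule.span_induction with
      | mem u hu => obtain ⟨y', rfl⟩ := hu; exact h y y'
      | zero => simp
      | add u₁ u₂ _ _ h1 h2 => rw [lie_add, h1, h2, add_zero]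
      | smul c u _ h1 => rw [lie_smul, h1, smul_zero]
    | zero => intro u _; simp
    | add v₁ v₂ _ _ h1 h2 => intro u hu; rw [add_lie, h1 u hu, h2 u hu, add_zero]
    | smul c v _ h1 => intro u hu; rw [smul_lie, h1 u hu, smul_zero]
  have hmem : ∀ w : FreeLieAlgebra C Y, g w ∈ V := by
    intro w
    have := freeLie_mem_subalgebra (C := C)
      (K := { V.comap g.toLinearMap with
              lie_mem' := fun {x y} hx hy => by
                have : g ⁅x, y⁆ = ⁅g x, g y⁆ := g.map_lie x y
                show g ⁅x, y⁆ ∈ V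
                rw [this, hbr (g x) hx (g y) hy]
                exact V.zero_mem }) (fun y => Submodule.subset_span ⟨y, rfl⟩) w
    exact this
  exact hbr _ (hmem w) _ (hmem w')

theorem map_derived_zero {Y M : Type*} [LieRing M] [LieAlgebra C M]
    (g : FreeLieAlgebra C Y →ₗ⁅C⁆ M)
    (h : ∀ y y' : Y, ⁅g (of C y), g (of C y')⁆ = 0) (w : FreeLieAlgebra C Y)
    (hw : w ∈ LieAlgebra.derivedSeries C (FreeLieAlgebra C Y) 1) : g w = 0 := by
  rw [mem_derived_iff] at hw
  induction hw using Submodule.span_induction with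
  | mem w hw => obtain ⟨u, v, rfl⟩ := hw; rw [g.map_lie]; exact pairwise_bracket_zero g h u v
  | zero => simp
  | add u v _ _ h1 h2 => rw [map_add g, h1, h2, add_zero]
  | smul c u _ h1 => rw [map_smul g, h1, smul_zero]

end Aux1

section Aux2
variable {C : Type*} [CommRing C] {X : Type*}

theorem locProj_of_mem (A : Set X) (Rel : ∀ A : Set X, Set (FreeLieAlgebra C A))
    {x : X} (h : x ∈ A) :
    locProj C A Rel (of C x) = locMk C A Rel (of C (⟨x, h⟩ : A)) := by
  rw [locProj, FreeLieAlgebra.lift_of_apply, dif_pos h]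

theorem locProj_of_not_mem (A : Set X) (Rel : ∀ A : Set X, Set (FreeLieAlgebra C A))
    {x : X} (h : x ∉ A) : locProj C A Rel (of C x) = 0 := by
  rw [locProj, FreeLieAlgebra.lift_of_apply, dif_neg h]

theorem inclX_of (A : Set X) (a : A) : inclX C A (of C a) = of C (a : X) := by
  rw [inclX, FreeLieAlgebra.lift_of_apply]

theorem lieMkHom_loc (A : Set X) (Rel : ∀ A : Set X, Set (FreeLieAlgebra C A))
    (w : FreeLieAlgebra C A) : lieMkHom (locIdeal C A Rel) w = locMk C A Rel w := rfl

theorem lieMkHom_arr (𝒜 : Set (Set X)) (Rel : ∀ A : Set X, Set (FreeLieAlgebra C A))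
    (w : FreeLieAlgebra C X) : lieMkHom (definingIdeal C 𝒜 Rel) w = arrMk C 𝒜 Rel w := rfl

theorem locProj_comp_inclX_self (A : Set X) (Rel : ∀ A : Set X, Set (FreeLieAlgebra C A)) :
    (locProj C A Rel).comp (inclX C A) = lieMkHom (locIdeal C A Rel) := by
  apply FreeLieAlgebra.hom_ext
  intro a
  rw [LieHom.comp_apply, inclX_of, locProj_of_mem A Rel a.2, lieMkHom_loc]

theorem locProj_inclX_gen_zero {A B : Set X} (Rel : ∀ A : Set X, Set (FreeLieAlgebra C A))
    (hsub : (A ∩ B).Subsingleton) (b b' : B) :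
    ⁅((locProj C A Rel).comp (inclX C B)) (of C b),
      ((locProj C A Rel).comp (inclX C B)) (of C b')⁆ = 0 := by
  simp only [LieHom.comp_apply, inclX_of]
  by_cases hb : (b : X) ∈ A
  · by_cases hb' : (b' : X) ∈ A
    · rw [locProj_of_mem A Rel hb, locProj_of_mem A Rel hb']
      have : (⟨(b : X), hb⟩ : A) = ⟨(b' : X), hb'⟩ :=
        Subtype.ext (hsub ⟨hb, b.2⟩ ⟨hb', b'.2⟩)
      rw [this, lie_self]
    · rw [locProj_of_not_mem A Rel hb', lie_zero]
  · rw [locProj_of_not_mem A Rel hb, zero_lie]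

theorem locProj_definingIdeal {𝒜 : Set (Set X)} {Rel : ∀ A : Set X, Set (FreeLieAlgebra C A)}
    (h𝒜 : IsSetArrangement 𝒜) (hRel : AdmissibleRel C 𝒜 Rel)
    {A : Set X} (hA : A ∈ 𝒜) : ∀ w ∈ definingIdeal C 𝒜 Rel, locProj C A Rel w = 0 := by
  have hle : definingIdeal C 𝒜 Rel ≤ (locProj C A Rel).ker := by
    rw [definingIdeal]
    rw [LieSubmodule.lieSpan_le]
    rintro z (⟨x, y, hxy, rfl⟩ | hz)
    · rw [SetLike.mem_coe, LieHom.mem_ker, LieHom.map_lie]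
      by_cases hx : x ∈ A
      · have hy : y ∉ A := fun hy => hxy A hA (by rintro t (rfl | rfl); exacts [hx, hy])
        rw [locProj_of_not_mem A Rel hy, lie_zero]
      · rw [locProj_of_not_mem A Rel hx, zero_lie]
    · simp only [Set.mem_iUnion, Set.mem_image] at hz
      obtain ⟨B, hB, r, hr, rfl⟩ := hz
      rw [SetLike.mem_coe, LieHom.mem_ker]
      by_cases hBA : B = A
      · subst hBA
        have := LieHom.congr_fun (locProj_comp_inclX_self B Rel) r
        rw [LieHom.comp_apply] at this
        rw [this, lieMkHom_loc]
        exact (LieSubmodule.Quotient.mk_eq_zero (locIdeal C B Rel)).2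
          (LieSubmodule.subset_lieSpan hr)
      · exact map_derived_zero ((locProj C A Rel).comp (inclX C B))
          (locProj_inclX_gen_zero Rel (h𝒜.2.1 A hA B hB (Ne.symm hBA))) r (hRel B hB hr)
  intro w hw
  exact LieHom.mem_ker.1 (hle hw)

/-- The projection `L → L_A`. -/
noncomputable def piBar {𝒜 : Set (Set X)} {Rel : ∀ A : Set X, Set (FreeLieAlgebra C A)}
    (h𝒜 : IsSetArrangement 𝒜) (hRel : AdmissibleRel C 𝒜 Rel) {A : Set X} (hA : A ∈ 𝒜) :
    ArrLie C 𝒜 Rel →ₗ⁅C⁆ LocLie C A Rel :=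
  lieQuotLift _ (locProj C A Rel) (locProj_definingIdeal h𝒜 hRel hA)

theorem piBar_mk {𝒜 : Set (Set X)} {Rel : ∀ A : Set X, Set (FreeLieAlgebra C A)}
    (h𝒜 : IsSetArrangement 𝒜) (hRel : AdmissibleRel C 𝒜 Rel) {A : Set X} (hA : A ∈ 𝒜)
    (w : FreeLieAlgebra C X) :
    piBar h𝒜 hRel hA (arrMk C 𝒜 Rel w) = locProj C A Rel w := rfl

theorem arrMk_surjective (𝒜 : Set (Set X)) (Rel : ∀ A : Set X, Set (FreeLieAlgebra C A)) :
    Function.Surjective (arrMk C 𝒜 Rel) :=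
  LieSubmodule.Quotient.surjective_mk' _

theorem locMk_surjective (A : Set X) (Rel : ∀ A : Set X, Set (FreeLieAlgebra C A)) :
    Function.Surjective (locMk C A Rel) :=
  LieSubmodule.Quotient.surjective_mk' _

theorem arrLie_mem_subalgebra {𝒜 : Set (Set X)} {Rel : ∀ A : Set X, Set (FreeLieAlgebra C A)}
    {K : LieSubalgebra C (ArrLie C 𝒜 Rel)} (h : ∀ x : X, arrMk C 𝒜 Rel (of C x) ∈ K)
    (u : ArrLie C 𝒜 Rel) : u ∈ K := by
  obtain ⟨w, rfl⟩ := arrMk_surjective 𝒜 Rel u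
  exact freeLie_mem_subalgebra (K := K.comap (lieMkHom (definingIdeal C 𝒜 Rel))) h w

end Aux2

section Aux3
variable {C : Type*} [CommRing C] {X : Type*}
variable {𝒜 : Set (Set X)} {Rel : ∀ A : Set X, Set (FreeLieAlgebra C A)}

theorem bracket_mem_derived {L : Type*} [LieRing L] [LieAlgebra C L] (u v : L) :
    ⁅u, v⁆ ∈ LieAlgebra.derivedSeries C L 1 :=
  (mem_derived_iff _).2 (Submodule.subset_span ⟨u, v, rfl⟩)

variable {s : ∀ A : 𝒜, LocLie C (A : Set X) Rel →ₗ⁅C⁆ ArrLie C 𝒜 Rel}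

theorem s_mk (hs : ∀ (A : 𝒜) (a : (A : Set X)),
      s A (locMk C (A : Set X) Rel (of C a)) = arrMk C 𝒜 Rel (of C (a : X)))
    (A : 𝒜) (w : FreeLieAlgebra C (A : Set X)) :
    s A (locMk C (A : Set X) Rel w) = arrMk C 𝒜 Rel (inclX C (A : Set X) w) := by
  have h : (s A).comp (lieMkHom (locIdeal C (A : Set X) Rel)) =
      (lieMkHom (definingIdeal C 𝒜 Rel)).comp (inclX C (A : Set X)) := by
    apply FreeLieAlgebra.hom_ext
    intro a
    rw [LieHom.comp_apply, LieHom.comp_apply, lieMkHom_loc, hs, inclX_of, lieMkHom_arr]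
  exact LieHom.congr_fun h w

theorem pi_s_self (h𝒜 : IsSetArrangement 𝒜) (hRel : AdmissibleRel C 𝒜 Rel)
    (hs : ∀ (A : 𝒜) (a : (A : Set X)),
      s A (locMk C (A : Set X) Rel (of C a)) = arrMk C 𝒜 Rel (of C (a : X)))
    (A : 𝒜) (z : LocLie C (A : Set X) Rel) :
    piBar h𝒜 hRel A.2 (s A z) = z := by
  obtain ⟨w, rfl⟩ := locMk_surjective (A : Set X) Rel z
  rw [s_mk hs]
  have h2 := LieHom.congr_fun (locProj_comp_inclX_self (A : Set X) Rel) w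
  rw [LieHom.comp_apply, lieMkHom_loc] at h2
  exact h2

theorem pi_s_ne (h𝒜 : IsSetArrangement 𝒜) (hRel : AdmissibleRel C 𝒜 Rel)
    (hs : ∀ (A : 𝒜) (a : (A : Set X)),
      s A (locMk C (A : Set X) Rel (of C a)) = arrMk C 𝒜 Rel (of C (a : X)))
    {A B : 𝒜} (hAB : A ≠ B) {z : LocLie C (B : Set X) Rel}
    (hz : z ∈ LieAlgebra.derivedSeries C (LocLie C (B : Set X) Rel) 1) :
    piBar h𝒜 hRel A.2 (s B z) = 0 := by
  have hsub : ((A : Set X) ∩ (B : Set X)).Subsingleton :=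
    h𝒜.2.1 A A.2 B B.2 (fun h => hAB (Subtype.ext h))
  rw [mem_derived_iff] at hz
  induction hz using Submodule.span_induction with
  | mem z hz =>
    obtain ⟨u, v, rfl⟩ := hz
    obtain ⟨wu, rfl⟩ := locMk_surjective (B : Set X) Rel u
    obtain ⟨wv, rfl⟩ := locMk_surjective (B : Set X) Rel v
    have h1 : (⁅locMk C (B : Set X) Rel wu, locMk C (B : Set X) Rel wv⁆ :
        LocLie C (B : Set X) Rel) = locMk C (B : Set X) Rel ⁅wu, wv⁆ := rfl
    rw [h1, s_mk hs, piBar_mk, LieHom.map_lie, LieHom.map_lie]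
    exact pairwise_bracket_zero ((locProj C (A : Set X) Rel).comp (inclX C (B : Set X)))
      (locProj_inclX_gen_zero Rel hsub) wu wv
  | zero => rw [map_zero (s B), map_zero (piBar h𝒜 hRel A.2)]
  | add u v _ _ h1 h2 =>
    rw [map_add (s B), map_add (piBar h𝒜 hRel A.2), h1, h2, add_zero]
  | smul c u _ h1 =>
    rw [map_smul (s B), map_smul (piBar h𝒜 hRel A.2), h1, smul_zero]

/-- The image `im(s_A')` as a submodule. -/
noncomputable abbrev imDer (s : ∀ A : 𝒜, LocLie C (A : Set X) Rel →ₗ⁅C⁆ ArrLie C 𝒜 Rel)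
    (A : 𝒜) : Submodule C (ArrLie C 𝒜 Rel) :=
  Submodule.map (s A).toLinearMap
    (LieSubmodule.toSubmodule (LieAlgebra.derivedSeries C (LocLie C (A : Set X) Rel) 1))

theorem lie_mem_imDer
    (hs : ∀ (A : 𝒜) (a : (A : Set X)),
      s A (locMk C (A : Set X) Rel (of C a)) = arrMk C 𝒜 Rel (of C (a : X)))
    (hcomm : ∀ (A : 𝒜) (x : X), x ∉ (A : Set X) →
      ∀ r ∈ s A '' (LieAlgebra.derivedSeries C (LocLie C (A : Set X) Rel) 1 :
        Set (LocLie C (A : Set X) Rel)), ⁅arrMk C 𝒜 Rel (of C x), r⁆ = 0)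
    (A : 𝒜) (u : ArrLie C 𝒜 Rel) {m : ArrLie C 𝒜 Rel} (hm : m ∈ imDer s A) :
    ⁅u, m⁆ ∈ imDer s A := by
  let Q : Submodule C (ArrLie C 𝒜 Rel) :=
    { carrier := {u | ∀ m ∈ imDer s A, ⁅u, m⁆ ∈ imDer s A}
      add_mem' := fun hu hv m hm => by
        rw [add_lie]; exact Submodule.add_mem _ (hu m hm) (hv m hm)
      zero_mem' := fun m hm => by rw [zero_lie]; exact Submodule.zero_mem _
      smul_mem' := fun c u hu m hm => by
        rw [smul_lie]; exact Submodule.smul_mem _ c (hu m hm) }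
  let K : LieSubalgebra C (ArrLie C 𝒜 Rel) :=
    { Q with
      lie_mem' := fun {u v} hu hv => by
        intro m hm
        rw [lie_lie]
        exact Submodule.sub_mem _ (hu _ (hv m hm)) (hv _ (hu m hm)) }
  have hgen : ∀ x : X, arrMk C 𝒜 Rel (of C x) ∈ K := by
    intro x m hm
    obtain ⟨z, hz, rfl⟩ := hm
    show ⁅arrMk C 𝒜 Rel (of C x), s A z⁆ ∈ imDer s A
    by_cases hx : x ∈ (A : Set X)
    · have h1 : arrMk C 𝒜 Rel (of C x) =
        s A (locMk C (A : Set X) Rel (of C (⟨x, hx⟩ : (A : Set X)))) := (hs A ⟨x, hx⟩).symm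
      rw [h1, ← (s A).map_lie]
      exact ⟨⁅locMk C (A : Set X) Rel (of C (⟨x, hx⟩ : (A : Set X))), z⁆,
        (LieAlgebra.derivedSeries C (LocLie C (A : Set X) Rel) 1).lie_mem hz, rfl⟩
    · rw [hcomm A x hx _ ⟨z, hz, rfl⟩]
      exact Submodule.zero_mem _
  exact arrLie_mem_subalgebra hgen u m hm

end Aux3

-- ===== end aux =====

set_option maxHeartbeats 1600000 in
/-- If `[x, im(s_A')] = 0` for all `A ∈ 𝒜` and `x ∈ X \ A`, then
`L' = ⊕_{A∈𝒜} im(s_A')` (internal direct sum), `[im(s_A'), im(s_B')] = 0` for `A ≠ B`,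
and `L'` is isomorphic as a Lie algebra to the direct product `⊕_{A∈𝒜} L_A'`. -/
theorem statement6 {C : Type*} [CommRing C] {X : Type*} [Fintype X]
    (𝒜 : Set (Set X)) [Fintype ↥𝒜] (Rel : ∀ A : Set X, Set (FreeLieAlgebra C A))
    (h𝒜 : IsSetArrangement 𝒜) (hRel : AdmissibleRel C 𝒜 Rel)
    (s : ∀ A : 𝒜, LocLie C (A : Set X) Rel →ₗ⁅C⁆ ArrLie C 𝒜 Rel)
    (hs : ∀ (A : 𝒜) (a : (A : Set X)),
      s A (locMk C (A : Set X) Rel (of C a)) = arrMk C 𝒜 Rel (of C (a : X)))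
    (hcomm : ∀ (A : 𝒜) (x : X), x ∉ (A : Set X) →
      ∀ r ∈ s A ''
        (LieAlgebra.derivedSeries C (LocLie C (A : Set X) Rel) 1 : Set (LocLie C (A : Set X) Rel)),
        ⁅arrMk C 𝒜 Rel (of C x), r⁆ = 0) :
    -- `L' = Σ_A im(s_A')` …
    (LieSubmodule.toSubmodule (LieAlgebra.derivedSeries C (ArrLie C 𝒜 Rel) 1) =
      ⨆ A : 𝒜, Submodule.map (s A).toLinearMap
        (LieSubmodule.toSubmodule (LieAlgebra.derivedSeries C (LocLie C (A : Set X) Rel) 1))) ∧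
    -- … and the sum is direct
    (∀ r : 𝒜 → ArrLie C 𝒜 Rel,
      (∀ A : 𝒜, r A ∈ s A ''
        (LieAlgebra.derivedSeries C (LocLie C (A : Set X) Rel) 1 : Set (LocLie C (A : Set X) Rel))) →
      ∑ A : 𝒜, r A = 0 → ∀ A : 𝒜, r A = 0) ∧
    -- `[im(s_A'), im(s_B')] = 0` for `A ≠ B`
    (∀ A B : 𝒜, A ≠ B →
      ∀ r ∈ s A ''
        (LieAlgebra.derivedSeries C (LocLie C (A : Set X) Rel) 1 : Set (LocLie C (A : Set X) Rel)),
      ∀ t ∈ s B ''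
        (LieAlgebra.derivedSeries C (LocLie C (B : Set X) Rel) 1 : Set (LocLie C (B : Set X) Rel)),
        ⁅r, t⁆ = 0) ∧
    -- `L' ≅ ⊕_A L_A'` as Lie algebras
    Nonempty (↥(LieAlgebra.derivedSeries C (ArrLie C 𝒜 Rel) 1) ≃ₗ⁅C⁆
      (⨁ A : 𝒜, ↥(LieAlgebra.derivedSeries C (LocLie C (A : Set X) Rel) 1))) := by
  classical
  -- The candidate sum `M = Σ_A im(s_A')`.
  set M : Submodule C (ArrLie C 𝒜 Rel) := ⨆ A : 𝒜, imDer s A with hMdef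
  -- `M` is stable under brackets with arbitrary elements.
  have hMst : ∀ (u : ArrLie C 𝒜 Rel), ∀ m ∈ M, ⁅u, m⁆ ∈ M := by
    intro u m hm
    refine Submodule.iSup_induction (motive := fun m => ⁅u, m⁆ ∈ M) _ hm (fun A m hm => ?_) ?_ ?_
    · exact le_iSup (fun A : 𝒜 => imDer s A) A (lie_mem_imDer hs hcomm A u hm)
    · show ⁅u, (0 : ArrLie C 𝒜 Rel)⁆ ∈ M
      rw [lie_zero]; exact M.zero_mem
    · intro x y hx hy
      show ⁅u, x + y⁆ ∈ M
      rw [lie_add]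
      exact M.add_mem hx hy
  -- brackets of generators with anything lie in `M`
  have hgenbr : ∀ (x : X) (u : ArrLie C 𝒜 Rel), ⁅arrMk C 𝒜 Rel (of C x), u⁆ ∈ M := by
    intro x
    let Qx : LieSubalgebra C (ArrLie C 𝒜 Rel) :=
      { carrier := {u | ⁅arrMk C 𝒜 Rel (of C x), u⁆ ∈ M}
        add_mem' := fun {a b} ha hb => by
          show ⁅_, a + b⁆ ∈ M; rw [lie_add]; exact M.add_mem ha hb
        zero_mem' := by show ⁅_, (0 : ArrLie C 𝒜 Rel)⁆ ∈ M; rw [lie_zero]; exact M.zero_mem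
        smul_mem' := fun c a ha => by
          show ⁅_, c • a⁆ ∈ M; rw [lie_smul]; exact M.smul_mem c ha
        lie_mem' := fun {a b} ha hb => by
          show ⁅_, ⁅a, b⁆⁆ ∈ M
          rw [leibniz_lie]
          refine M.add_mem ?_ (hMst a _ hb)
          have h4 : (⁅⁅arrMk C 𝒜 Rel (of C x), a⁆, b⁆ : ArrLie C 𝒜 Rel)
              = -⁅b, ⁅arrMk C 𝒜 Rel (of C x), a⁆⁆ := (lie_skew _ _).symm
          rw [h4]
          exact M.neg_mem (hMst b _ ha) }
    have hgens : ∀ y : X, arrMk C 𝒜 Rel (of C y) ∈ Qx := by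
      intro y
      show ⁅arrMk C 𝒜 Rel (of C x), arrMk C 𝒜 Rel (of C y)⁆ ∈ M
      have hb : (⁅arrMk C 𝒜 Rel (of C x), arrMk C 𝒜 Rel (of C y)⁆ : ArrLie C 𝒜 Rel)
          = arrMk C 𝒜 Rel ⁅of C x, of C y⁆ := rfl
      rw [hb]
      by_cases hA : ∃ A ∈ 𝒜, ({x, y} : Set X) ⊆ A
      · obtain ⟨A, hA, hxy⟩ := hA
        have hx : x ∈ A := hxy (Set.mem_insert _ _)
        have hy : y ∈ A := hxy (Set.mem_insert_of_mem _ rfl)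
        have h2 : (⁅of C x, of C y⁆ : FreeLieAlgebra C X)
            = inclX C A ⁅of C (⟨x, hx⟩ : A), of C (⟨y, hy⟩ : A)⁆ := by
          rw [(inclX C A).map_lie, inclX_of, inclX_of]
        rw [h2, ← s_mk hs ⟨A, hA⟩]
        refine le_iSup (fun A : 𝒜 => imDer s A) ⟨A, hA⟩
          ⟨locMk C A Rel ⁅of C (⟨x, hx⟩ : A), of C (⟨y, hy⟩ : A)⁆, ?_, rfl⟩
        have h3 : locMk C A Rel ⁅of C (⟨x, hx⟩ : A), of C (⟨y, hy⟩ : A)⁆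
            = ⁅locMk C A Rel (of C (⟨x, hx⟩ : A)), locMk C A Rel (of C (⟨y, hy⟩ : A))⁆ := rfl
        rw [h3]
        exact bracket_mem_derived _ _
      · push_neg at hA
        have h0 : arrMk C 𝒜 Rel ⁅of C x, of C y⁆ = 0 :=
          (LieSubmodule.Quotient.mk_eq_zero _).2
            (LieSubmodule.subset_lieSpan (Or.inl ⟨x, y, hA, rfl⟩))
        rw [h0]; exact M.zero_mem
    intro u
    exact arrLie_mem_subalgebra hgens u
  -- all brackets lie in `M`
  have hall : ∀ u v : ArrLie C 𝒜 Rel, ⁅u, v⁆ ∈ M := by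
    let P : LieSubalgebra C (ArrLie C 𝒜 Rel) :=
      { carrier := {v : ArrLie C 𝒜 Rel | ∀ u : ArrLie C 𝒜 Rel, ⁅u, v⁆ ∈ M}
        add_mem' := fun {a b} ha hb u => by rw [lie_add]; exact M.add_mem (ha u) (hb u)
        zero_mem' := fun u => by rw [lie_zero]; exact M.zero_mem
        smul_mem' := fun c a ha u => by rw [lie_smul]; exact M.smul_mem c (ha u)
        lie_mem' := fun {a b} ha hb u => by
          rw [leibniz_lie]
          exact M.add_mem (hb ⁅u, a⁆) (hMst a _ (hb u)) }
    have hgens : ∀ y : X, arrMk C 𝒜 Rel (of C y) ∈ P := by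
      intro y u
      have h4 : (⁅u, arrMk C 𝒜 Rel (of C y)⁆ : ArrLie C 𝒜 Rel)
          = -⁅arrMk C 𝒜 Rel (of C y), u⁆ := (lie_skew _ _).symm
      rw [h4]
      exact M.neg_mem (hgenbr y u)
    intro u v
    exact arrLie_mem_subalgebra hgens v u
  -- Goal 1
  have goal1 : LieSubmodule.toSubmodule (LieAlgebra.derivedSeries C (ArrLie C 𝒜 Rel) 1) = M := by
    apply le_antisymm
    · rw [derived_coe_span, Submodule.span_le]
      rintro z ⟨u, v, rfl⟩
      exact hall u v
    · refine iSup_le fun A => ?_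
      rw [Submodule.map_le_iff_le_comap]
      intro z hz
      have hz' : z ∈ Submodule.span C
          {m : LocLie C (A : Set X) Rel | ∃ u v : LocLie C (A : Set X) Rel, ⁅u, v⁆ = m} := by
        rw [← derived_coe_span]; exact hz
      simp only [Submodule.mem_comap]
      clear hz
      induction hz' using Submodule.span_induction with
      | mem z hzm =>
        obtain ⟨u, v, rfl⟩ := hzm
        show s A ⁅u, v⁆ ∈ _
        rw [(s A).map_lie]
        exact bracket_mem_derived _ _
      | zero => rw [map_zero]; exact Submodule.zero_mem _
      | add u v _ _ h1 h2 => rw [map_add]; exact Submodule.add_mem _ h1 h2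
      | smul c u _ h1 => rw [map_smul]; exact Submodule.smul_mem _ c h1
  -- Goal 2
  have goal2 : ∀ r : 𝒜 → ArrLie C 𝒜 Rel,
      (∀ A : 𝒜, r A ∈ s A '' (LieAlgebra.derivedSeries C (LocLie C (A : Set X) Rel) 1 :
        Set (LocLie C (A : Set X) Rel))) → ∑ A : 𝒜, r A = 0 → ∀ A : 𝒜, r A = 0 := by
    intro r hr hsum A
    obtain ⟨z, hz, hEq⟩ := hr A
    have hterm : ∀ B : 𝒜, B ∈ Finset.univ → B ≠ A →
        (piBar h𝒜 hRel A.2).toLinearMap (r B) = 0 := by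
      intro B _ hBA
      obtain ⟨w, hw, hE⟩ := hr B
      rw [← hE]
      exact pi_s_ne h𝒜 hRel hs (Ne.symm hBA) hw
    have hπ : (piBar h𝒜 hRel A.2).toLinearMap (∑ B : 𝒜, r B) = z := by
      rw [map_sum]
      rw [Finset.sum_eq_single_of_mem A (Finset.mem_univ A)
        (fun B hB hBA => hterm B hB hBA), ← hEq]
      exact pi_s_self h𝒜 hRel hs A z
    rw [hsum, map_zero] at hπ
    rw [← hEq, hπ.symm]
    show (s A).toLinearMap 0 = 0
    exact map_zero _
  -- Goal 3
  have goal3 : ∀ A B : 𝒜, A ≠ B →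
      ∀ r ∈ s A '' (LieAlgebra.derivedSeries C (LocLie C (A : Set X) Rel) 1 :
        Set (LocLie C (A : Set X) Rel)),
      ∀ t ∈ s B '' (LieAlgebra.derivedSeries C (LocLie C (B : Set X) Rel) 1 :
        Set (LocLie C (B : Set X) Rel)), ⁅r, t⁆ = 0 := by
    intro A B hAB r hr t ht
    obtain ⟨z, hz, rfl⟩ := hr
    obtain ⟨w, hw, rfl⟩ := ht
    have h1 : ⁅s A z, s B w⁆ ∈ imDer s A := by
      have h5 := lie_mem_imDer hs hcomm A (s B w) (m := s A z) ⟨z, hz, rfl⟩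
      have h4 : (⁅s A z, s B w⁆ : ArrLie C 𝒜 Rel) = -⁅s B w, s A z⁆ := (lie_skew _ _).symm
      rw [h4]
      exact (imDer s A).neg_mem h5
    have h2 : ⁅s A z, s B w⁆ ∈ imDer s B :=
      lie_mem_imDer hs hcomm B (s A z) ⟨w, hw, rfl⟩
    obtain ⟨w', hw', hE2⟩ := h2
    obtain ⟨z', hz', hE1⟩ := h1
    have hπ : piBar h𝒜 hRel B.2 ⁅s A z, s B w⁆ = w' := by
      rw [← hE2]; exact pi_s_self h𝒜 hRel hs B w'
    have hπ0 : piBar h𝒜 hRel B.2 ⁅s A z, s B w⁆ = 0 := by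
      rw [← hE1]; exact pi_s_ne h𝒜 hRel hs (Ne.symm hAB) hz'
    have hw0 : w' = 0 := by rw [← hπ, hπ0]
    rw [← hE2, hw0, map_zero]
  -- Goal 4 : the direct sum decomposition
  let Φ : (⨁ A : 𝒜, ↥(LieAlgebra.derivedSeries C (LocLie C (A : Set X) Rel) 1)) →ₗ[C]
      ArrLie C 𝒜 Rel :=
    DirectSum.toModule C 𝒜 _ (fun A => (s A).toLinearMap ∘ₗ
      (LieSubmodule.toSubmodule (LieAlgebra.derivedSeries C (LocLie C (A : Set X) Rel) 1)).subtype)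
  have hΦof : ∀ (A : 𝒜) (z : ↥(LieAlgebra.derivedSeries C (LocLie C (A : Set X) Rel) 1)),
      Φ (DirectSum.lof C 𝒜 _ A z) = s A ↑z := by
    intro A z
    exact DirectSum.toModule_lof (R := C) (ι := 𝒜)
      (M := fun A : 𝒜 => ↥(LieAlgebra.derivedSeries C (LocLie C (A : Set X) Rel) 1))
      (N := ArrLie C 𝒜 Rel) A z
  have hrange : LinearMap.range Φ = M := by
    apply le_antisymm
    · rintro _ ⟨f, rfl⟩
      induction f using DirectSum.induction_on with
      | zero => rw [map_zero]; exact M.zero_mem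
      | of A z =>
        rw [← DirectSum.lof_eq_of C, hΦof]
        exact le_iSup (fun A : 𝒜 => imDer s A) A ⟨z.1, z.2, rfl⟩
      | add f g hf hg => rw [map_add]; exact M.add_mem hf hg
    · refine iSup_le fun A => ?_
      rintro m ⟨z, hz, rfl⟩
      exact ⟨DirectSum.lof C 𝒜 _ A ⟨z, hz⟩, hΦof A ⟨z, hz⟩⟩
  have hπΦ : ∀ (A : 𝒜) f, piBar h𝒜 hRel A.2 (Φ f) = ((f A :
      ↥(LieAlgebra.derivedSeries C (LocLie C (A : Set X) Rel) 1)) : LocLie C (A : Set X) Rel) := by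
    intro A f
    induction f using DirectSum.induction_on with
    | zero =>
      rw [map_zero, map_zero (piBar h𝒜 hRel A.2)]
      rfl
    | of B z =>
      rw [← DirectSum.lof_eq_of C, hΦof]
      by_cases hBA : B = A
      · subst hBA
        rw [DirectSum.lof_eq_of C, DirectSum.of_eq_same]
        exact pi_s_self h𝒜 hRel hs B ↑z
      · rw [pi_s_ne h𝒜 hRel hs (fun h => hBA h.symm) z.2, DirectSum.lof_eq_of C,
          DirectSum.of_eq_of_ne _ _ _ (Ne.symm hBA)]
        rfl
    | add f g hf hg =>
      rw [map_add, map_add (piBar h𝒜 hRel A.2), hf, hg, DirectSum.add_apply]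
      rfl
  have hinj : Function.Injective Φ := by
    rw [← LinearMap.ker_eq_bot, Submodule.eq_bot_iff]
    intro f hf
    rw [LinearMap.mem_ker] at hf
    refine DFinsupp.ext fun A => ?_
    have h6 := hπΦ A f
    rw [hf, map_zero (piBar h𝒜 hRel A.2)] at h6
    exact Subtype.ext h6.symm
  -- bracket compatibility of Φ
  have hbr : ∀ f g, Φ ⁅f, g⁆ = ⁅Φ f, Φ g⁆ := by
    intro f g
    induction f using DirectSum.induction_on with
    | zero => simp only [zero_lie, map_zero]
    | add f₁ f₂ h1 h2 => simp only [add_lie, map_add, h1, h2]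
    | of A z =>
      induction g using DirectSum.induction_on with
      | zero => simp only [lie_zero, map_zero]
      | add g₁ g₂ h1 h2 => simp only [lie_add, map_add, h1, h2]
      | of B w =>
        by_cases hAB : A = B
        · subst hAB
          rw [DirectSum.lie_of_same, ← DirectSum.lof_eq_of C, ← DirectSum.lof_eq_of C,
            ← DirectSum.lof_eq_of C, hΦof, hΦof, hΦof]
          have h8 : ((⁅z, w⁆ : ↥(LieAlgebra.derivedSeries C (LocLie C (A : Set X) Rel) 1)) :
              LocLie C (A : Set X) Rel) = ⁅(z : LocLie C (A : Set X) Rel), ↑w⁆ := rfl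
          rw [h8, (s A).map_lie]
        · rw [DirectSum.lie_of_of_ne _ hAB, map_zero, ← DirectSum.lof_eq_of C,
            ← DirectSum.lof_eq_of C, hΦof, hΦof]
          exact (goal3 A B hAB _ ⟨z, z.2, rfl⟩ _ ⟨w, w.2, rfl⟩).symm
  -- assemble the Lie algebra equivalence
  let ψ : (⨁ A : 𝒜, ↥(LieAlgebra.derivedSeries C (LocLie C (A : Set X) Rel) 1)) →ₗ[C]
      ↥(LieSubmodule.toSubmodule (LieAlgebra.derivedSeries C (ArrLie C 𝒜 Rel) 1)) :=
    LinearMap.codRestrict _ Φ (fun f => by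
      rw [goal1]
      exact hrange.le ⟨f, rfl⟩)
  have hψbij : Function.Bijective ψ := by
    constructor
    · intro a b hab
      exact hinj (congrArg Subtype.val hab)
    · rintro ⟨m, hm⟩
      have : m ∈ LinearMap.range Φ := by rw [hrange, ← goal1]; exact hm
      obtain ⟨f, rfl⟩ := this
      exact ⟨f, rfl⟩
  let e := LinearEquiv.ofBijective ψ hψbij
  have heψ : ∀ f, ((e f :
      ↥(LieAlgebra.derivedSeries C (ArrLie C 𝒜 Rel) 1)) : ArrLie C 𝒜 Rel) = Φ f := fun _ => rfl
  let eL : (⨁ A : 𝒜, ↥(LieAlgebra.derivedSeries C (LocLie C (A : Set X) Rel) 1)) ≃ₗ⁅C⁆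
      ↥(LieAlgebra.derivedSeries C (ArrLie C 𝒜 Rel) 1) :=
    { e with
      map_lie' := fun {f g} => by
        apply Subtype.ext
        show Φ ⁅f, g⁆ = _
        rw [hbr f g]
        rfl }
  refine ⟨goal1, goal2, goal3, ⟨eL.symm⟩⟩
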